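/- The set of simple functions is dense in $QA_{\varphi,\psi}$: for every $f\in QA_{\varphi,\psi}$ and every $\varepsilon>0$ there exists a simple function $s$ on $[0,1]$ (a finite linear combination of characteristic functions of measurable sets) such that $\|f-s\|_{\varphi,\psi}<\varepsilon$. -/

import Mathlib

open MeasureTheory ENNReal Set Filter Topology

noncomputable section

/-- Lebesgue measure restricted to the interval `[0,1]`. -/
def μ01 : Measure ℝ := volume.restrict (Set.Icc 0 1)

/-- `φ : [0,1] → [0,∞)` is concave, non-decreasing, and vanishes only at the origin. -/
structure IsPhi (φ : ℝ → ℝ) : Prop where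
  concave : ConcaveOn ℝ (Set.Icc 0 1) φ
  mono : MonotoneOn φ (Set.Icc 0 1)
  zero : φ 0 = 0
  pos : ∀ t : ℝ, 0 < t → t ≤ 1 → 0 < φ t

/-- `ψ : [0,∞) → [0,∞)` is concave, non-decreasing, and vanishes only at the origin. -/
structure IsPsi (ψ : ℝ → ℝ) : Prop where
  concave : ConcaveOn ℝ (Set.Ici 0) ψ
  mono : MonotoneOn ψ (Set.Ici 0)
  zero : ψ 0 = 0
  pos : ∀ t : ℝ, 0 < t → 0 < ψ t

/-- A sequence `g` of nonnegative `L^∞` functions with `|f| ≤ ∑ₙ gₙ` a.e. -/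
def Admissible (f : ℝ → ℝ) (g : ℕ → ℝ → ℝ) : Prop :=
  (∀ n, AEMeasurable (g n) μ01) ∧
  (∀ n, eLpNorm (g n) ⊤ μ01 < ⊤) ∧
  (∀ n x, 0 ≤ g n x) ∧
  (∀ᵐ x ∂μ01, ENNReal.ofReal |f x| ≤ ∑' n : ℕ, ENNReal.ofReal (g n x))

/-- The cost `∑ₙ ψ(n) ‖gₙ‖_∞ φ(‖gₙ‖₁/‖gₙ‖_∞)` of a decomposition (index shifted by 1;
`0/0 = 0` by the `ℝ≥0∞` division convention, and `φ 0 = 0`). -/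
def seqCost (φ ψ : ℝ → ℝ) (g : ℕ → ℝ → ℝ) : ℝ≥0∞ :=
  ∑' n : ℕ, ENNReal.ofReal
    (ψ ((n : ℝ) + 1) * (eLpNorm (g n) ⊤ μ01).toReal *
      φ ((eLpNorm (g n) 1 μ01 / eLpNorm (g n) ⊤ μ01).toReal))

/-- The quasi-norm `‖f‖_{φ,ψ}` (equal to `∞` when no admissible decomposition exists). -/
def QANorm (φ ψ : ℝ → ℝ) (f : ℝ → ℝ) : ℝ≥0∞ :=
  ⨅ (g : ℕ → ℝ → ℝ) (_ : Admissible f g), seqCost φ ψ g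

/-- Membership in the space `QA_{φ,ψ}`. -/
def MemQA (φ ψ : ℝ → ℝ) (f : ℝ → ℝ) : Prop :=
  AEMeasurable f μ01 ∧ QANorm φ ψ f < ⊤

/-- The decreasing rearrangement `f*` of `f` on `[0,1]`. -/
def decRearr (f : ℝ → ℝ) (t : ℝ) : ℝ :=
  sInf {s : ℝ | 0 ≤ s ∧ μ01 {x | s < |f x|} ≤ ENNReal.ofReal t}

/-- The limit `ζ(0⁺)` of a non-decreasing function `ζ` on `[0,1]`. -/
def limZero (ζ : ℝ → ℝ) : ℝ := sInf (ζ '' Set.Ioc 0 1)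

/-- The Lorentz norm `‖f‖_{Λ_ζ} = ∫₀¹ f* dζ = ‖f‖_∞ ζ(0⁺) + ∫₀¹ f*(s) ζ'(s) ds`
(for `ζ` concave the derivative exists a.e. and `ζ` is absolutely continuous on `(0,1]`). -/
def lorentzNorm (ζ : ℝ → ℝ) (f : ℝ → ℝ) : ℝ≥0∞ :=
  eLpNorm f ⊤ μ01 * ENNReal.ofReal (limZero ζ) +
    ∫⁻ s in Set.Ioc (0:ℝ) 1, ENNReal.ofReal (decRearr f s * deriv ζ s)

/-- Membership in the Lorentz space `Λ_ζ`. -/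
def MemLorentz (ζ : ℝ → ℝ) (f : ℝ → ℝ) : Prop :=
  AEMeasurable f μ01 ∧ lorentzNorm ζ f < ⊤

/-- The quasi-concave function `φ_s(t) = inf_n max{sₙ,t} (φ(sₙ)/sₙ) ψ(n)` (index shifted by 1). -/
def phiSeq (φ ψ : ℝ → ℝ) (s : ℕ → ℝ) (t : ℝ) : ℝ :=
  if t = 0 then 0 else ⨅ n : ℕ, max (s n) t * (φ (s n) / s n) * ψ ((n : ℝ) + 1)

/-- The function `τ(t) = φ(t) ψ(logbar(φ(t)/t))` with `logbar t = 1 + log⁺ t`. -/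
def tauF (φ ψ : ℝ → ℝ) (t : ℝ) : ℝ :=
  if t = 0 then 0 else φ t * ψ (1 + max (Real.log (φ t / t)) 0)


instance : IsProbabilityMeasure μ01 := by
  constructor; simp [μ01, Real.volume_Icc]

lemma ratio_mem {u : ℝ → ℝ} (hu : AEMeasurable u μ01) :
    (eLpNorm u 1 μ01 / eLpNorm u ⊤ μ01).toReal ∈ Set.Icc (0:ℝ) 1 := by
  refine ⟨ENNReal.toReal_nonneg, ?_⟩
  have h1 : eLpNorm u 1 μ01 ≤ eLpNorm u ⊤ μ01 :=
    eLpNorm_le_eLpNorm_of_exponent_le le_top hu.aestronglyMeasurable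
  have h2 : eLpNorm u 1 μ01 / eLpNorm u ⊤ μ01 ≤ 1 :=
    ENNReal.div_le_of_le_mul (by simpa using h1)
  simpa using ENNReal.toReal_mono (by simp) h2

lemma phi_ratio_nonneg {φ : ℝ → ℝ} (hφ : IsPhi φ) {u : ℝ → ℝ} (hu : AEMeasurable u μ01) :
    0 ≤ φ ((eLpNorm u 1 μ01 / eLpNorm u ⊤ μ01).toReal) := by
  have h := ratio_mem hu
  have := hφ.mono (Set.mem_Icc.mpr ⟨le_refl 0, zero_le_one⟩) h h.1
  simpa [hφ.zero] using this

set_option maxHeartbeats 2000000 in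
/-- simple functions are dense in `QA_{φ,ψ}`. -/
theorem stmt7 {φ ψ : ℝ → ℝ} (hφ : IsPhi φ) (hψ : IsPsi ψ)
    (f : ℝ → ℝ) (hf : MemQA φ ψ f) (ε : ℝ) (hε : 0 < ε) :
    ∃ s : SimpleFunc ℝ ℝ, QANorm φ ψ (f - ⇑s) < ENNReal.ofReal ε := by
  obtain ⟨hfm, hfq⟩ := hf
  rw [QANorm] at hfq
  obtain ⟨g, hg⟩ := iInf_lt_iff.mp hfq
  obtain ⟨hAdm, hcost⟩ := iInf_lt_iff.mp hg
  obtain ⟨hgm, hgb, hgpos, hgdom⟩ := hAdm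
  set t : ℕ → ℝ≥0∞ := fun n => ENNReal.ofReal
    (ψ ((n : ℝ) + 1) * (eLpNorm (g n) ⊤ μ01).toReal *
      φ ((eLpNorm (g n) 1 μ01 / eLpNorm (g n) ⊤ μ01).toReal)) with ht
  have hcost' : ∑' n, t n ≠ ⊤ := by simpa [seqCost, ht] using hcost.ne
  have hε4 : (0:ℝ≥0∞) < ENNReal.ofReal (ε/4) := ENNReal.ofReal_pos.mpr (by linarith)
  have htail := ENNReal.tendsto_sum_nat_add t hcost'
  have hev : ∀ᶠ N in atTop, (∑' k, t (k+N)) < ENNReal.ofReal (ε/4) :=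
    htail.eventually_lt_const hε4
  obtain ⟨N, hNtail, hN1⟩ := (hev.and (eventually_ge_atTop 1)).exists
  -- the bound M and truncation
  set M : ℝ := ∑ i ∈ Finset.range N, (eLpNorm (g i) ⊤ μ01).toReal with hMdef
  have hM0 : 0 ≤ M := Finset.sum_nonneg fun i _ => ENNReal.toReal_nonneg
  set F0 : ℝ → ℝ := hfm.mk f with hF0def
  have hF0 : Measurable F0 := hfm.measurable_mk
  have hfF0 : f =ᵐ[μ01] F0 := hfm.ae_eq_mk
  set F : ℝ → ℝ := fun x => max (-M) (min M (F0 x)) with hFdef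
  have hF : Measurable F := measurable_const.max (measurable_const.min hF0)
  have hFbd : ∀ x, |F x| ≤ M := by
    intro x
    rw [abs_le]
    refine ⟨le_max_left _ _, max_le (by linarith) (min_le_left _ _)⟩
  -- δ
  have hψ1 : 0 < ψ 1 := hψ.pos 1 one_pos
  have hφ1 : 0 ≤ φ 1 := by
    have := hφ.mono (Set.mem_Icc.mpr ⟨le_refl 0, zero_le_one⟩)
      (Set.mem_Icc.mpr ⟨zero_le_one, le_refl 1⟩) zero_le_one
    simpa [hφ.zero] using this
  set P : ℝ := ψ 1 * φ 1 with hPdef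
  have hP : 0 ≤ P := mul_nonneg hψ1.le hφ1
  set δ : ℝ := ε / (4 * (P + 1)) with hδdef
  have hδ : 0 < δ := div_pos hε (by positivity)
  -- the simple function
  set sfun : ℝ → ℝ := fun x => δ * ((⌊F x / δ⌋ : ℤ) : ℝ) with hsfun
  have hsm : Measurable sfun :=
    measurable_const.mul (measurable_from_top.comp ((hF.div_const δ).floor))
  have hrange : (Set.range sfun).Finite := by
    refine Set.Finite.subset (Set.Finite.image (fun k : ℤ => δ * (k:ℝ))
      (Set.finite_Icc ⌊-(M/δ)⌋ ⌊M/δ⌋)) ?_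
    rintro _ ⟨x, rfl⟩
    refine ⟨⌊F x / δ⌋, ⟨Int.floor_le_floor ?_, Int.floor_le_floor ?_⟩, rfl⟩
    · rw [← neg_div]
      exact (div_le_div_iff_of_pos_right hδ).mpr (neg_le_of_abs_le (hFbd x))
    · exact (div_le_div_iff_of_pos_right hδ).mpr (le_of_abs_le (hFbd x))
  set s : SimpleFunc ℝ ℝ := ⟨sfun, fun y => hsm (measurableSet_singleton y), hrange⟩ with hsdef
  have hscoe : ⇑s = sfun := rfl
  have hFs : ∀ x, 0 ≤ F x - sfun x ∧ F x - sfun x ≤ δ := by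
    intro x
    have h1 : (⌊F x / δ⌋ : ℝ) ≤ F x / δ := Int.floor_le _
    have h2 : F x / δ - 1 < ⌊F x / δ⌋ := Int.sub_one_lt_floor _
    have hsx : sfun x = δ * ((⌊F x / δ⌋ : ℤ) : ℝ) := rfl
    have h3 : δ * (F x / δ) = F x := by field_simp
    constructor
    · nlinarith [mul_le_mul_of_nonneg_left h1 hδ.le]
    · nlinarith [mul_lt_mul_of_pos_left h2 hδ]
  have hFsabs : ∀ x, |F x - sfun x| ≤ δ := fun x =>
    abs_le.mpr ⟨by linarith [(hFs x).1], (hFs x).2⟩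
  -- the decomposition G
  set G : ℕ → ℝ → ℝ := fun n =>
    Nat.casesOn n (fun x => |F x - sfun x|) fun k => g (k + N) with hGdef
  have hG0 : G 0 = fun x => |F x - sfun x| := rfl
  have hGsucc : ∀ k, G (k+1) = g (k + N) := fun k => rfl
  have hG0m : Measurable (G 0) := (hF.sub hsm).abs
  have hG0bd : eLpNorm (G 0) ⊤ μ01 ≤ ENNReal.ofReal δ := by
    refine eLpNormEssSup_le_of_ae_bound (ae_of_all _ fun x => ?_)
    simpa [hG0, abs_abs] using hFsabs x
  have hAdmG : Admissible (f - ⇑s) G := by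
    refine ⟨fun n => ?_, fun n => ?_, fun n x => ?_, ?_⟩
    · cases n with
      | zero => exact hG0m.aemeasurable
      | succ k => exact hgm (k + N)
    · cases n with
      | zero => exact lt_of_le_of_lt hG0bd ENNReal.ofReal_lt_top
      | succ k => exact hgb (k + N)
    · cases n with
      | zero => exact abs_nonneg _
      | succ k => exact hgpos (k + N) x
    · have hb : ∀ᵐ x ∂μ01, ∀ n, ENNReal.ofReal (g n x) ≤ eLpNorm (g n) ⊤ μ01 := by
        rw [ae_all_iff]
        intro n
        have := ae_le_eLpNormEssSup (f := g n) (μ := μ01)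
        filter_upwards [this] with x hx
        calc ENNReal.ofReal (g n x) ≤ ENNReal.ofReal ‖g n x‖ :=
              ENNReal.ofReal_le_ofReal (le_abs_self _)
          _ = ‖g n x‖ₑ := ofReal_norm _
          _ ≤ _ := by simpa using hx
      filter_upwards [hgdom, hfF0, hb] with x hx hfx hbx
      set T : ℝ≥0∞ := ∑' k, ENNReal.ofReal (g (k + N) x) with hTdef
      have hsplit : ∑ i ∈ Finset.range N, ENNReal.ofReal (g i x) + T
          = ∑' n, ENNReal.ofReal (g n x) := Summable.sum_add_tsum_nat_add' ENNReal.summable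
      have hMbound : ∑ i ∈ Finset.range N, ENNReal.ofReal (g i x) ≤ ENNReal.ofReal M := by
        have : ENNReal.ofReal M = ∑ i ∈ Finset.range N, eLpNorm (g i) ⊤ μ01 := by
          rw [hMdef, ENNReal.ofReal_sum_of_nonneg (fun i _ => ENNReal.toReal_nonneg)]
          exact Finset.sum_congr rfl fun i _ => ENNReal.ofReal_toReal (hgb i).ne
        rw [this]
        exact Finset.sum_le_sum fun i _ => hbx i
      have hfT : ENNReal.ofReal |f x| ≤ ENNReal.ofReal M + T := by
        calc ENNReal.ofReal |f x| ≤ ∑' n, ENNReal.ofReal (g n x) := hx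
          _ = ∑ i ∈ Finset.range N, ENNReal.ofReal (g i x) + T := hsplit.symm
          _ ≤ ENNReal.ofReal M + T := add_le_add_left hMbound T
      -- pointwise real inequality
      have hreal : |f x - sfun x| ≤ |F x - sfun x| + max (|f x| - M) 0 := by
        have hfx' : F x = max (-M) (min M (f x)) := by rw [hFdef]; simp [hfx]
        have hclamp : |f x - F x| ≤ max (|f x| - M) 0 := by
          rw [hfx']
          rcases le_total (f x) M with h1 | h1
          · rcases le_total (-M) (f x) with h2 | h2
            · rw [min_eq_right h1, max_eq_right h2]
              simp [le_max_iff]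
            · rw [min_eq_right h1, max_eq_left h2, abs_of_nonpos (by linarith)]
              have he : |f x| = -(f x) := abs_of_nonpos (by linarith)
              rw [le_max_iff]; left; linarith
          · rw [min_eq_left h1, max_eq_right (by linarith : -M ≤ M),
              abs_of_nonneg (by linarith)]
            have he : |f x| = f x := abs_of_nonneg (by linarith)
            rw [le_max_iff]; left; linarith
        have htri : |f x - sfun x| ≤ |f x - F x| + |F x - sfun x| :=
          abs_sub_le (f x) (F x) (sfun x)
        linarith
      have hmax : ENNReal.ofReal (max (|f x| - M) 0) = ENNReal.ofReal (|f x| - M) := by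
        rcases le_total (|f x| - M) 0 with h | h
        · rw [max_eq_right h, ENNReal.ofReal_zero, ENNReal.ofReal_of_nonpos h]
        · rw [max_eq_left h]
      have hGsum : ∑' n, ENNReal.ofReal (G n x)
          = ENNReal.ofReal (|F x - sfun x|) + T := by
        rw [tsum_eq_zero_add' ENNReal.summable]
        have h1 : ∑' k, ENNReal.ofReal (G (k+1) x) = T :=
          tsum_congr fun k => by rw [hGsucc k]
        simp only [h1, hG0]
      rw [hGsum]
      calc ENNReal.ofReal |(f - ⇑s) x| = ENNReal.ofReal |f x - sfun x| := by
            rw [hscoe]; rfl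
        _ ≤ ENNReal.ofReal (|F x - sfun x| + max (|f x| - M) 0) :=
            ENNReal.ofReal_le_ofReal hreal
        _ = ENNReal.ofReal (|F x - sfun x|) + ENNReal.ofReal (max (|f x| - M) 0) :=
            ENNReal.ofReal_add (abs_nonneg _) (le_max_right _ _)
        _ = ENNReal.ofReal (|F x - sfun x|) + ENNReal.ofReal (|f x| - M) := by rw [hmax]
        _ = ENNReal.ofReal (|F x - sfun x|) + (ENNReal.ofReal |f x| - ENNReal.ofReal M) := by
            rw [ENNReal.ofReal_sub _ hM0]
        _ ≤ ENNReal.ofReal (|F x - sfun x|) + T := by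
            gcongr
            exact tsub_le_iff_left.mpr hfT
  -- cost estimate
  have hle : QANorm φ ψ (f - ⇑s) ≤ seqCost φ ψ G := by
    rw [QANorm]; exact iInf₂_le G hAdmG
  set c : ℕ → ℝ≥0∞ := fun n => ENNReal.ofReal
    (ψ ((n : ℝ) + 1) * (eLpNorm (G n) ⊤ μ01).toReal *
      φ ((eLpNorm (G n) 1 μ01 / eLpNorm (G n) ⊤ μ01).toReal)) with hc
  have hcostG : seqCost φ ψ G = c 0 + ∑' k, c (k+1) := by
    rw [seqCost, ← hc, tsum_eq_zero_add' ENNReal.summable]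
  have hc0 : c 0 ≤ ENNReal.ofReal (ε/4) := by
    refine ENNReal.ofReal_le_ofReal ?_
    have hB : (eLpNorm (G 0) ⊤ μ01).toReal ≤ δ :=
      ENNReal.toReal_le_of_le_ofReal hδ.le hG0bd
    have hr := ratio_mem (u := G 0) hG0m.aemeasurable
    have hφr : φ ((eLpNorm (G 0) 1 μ01 / eLpNorm (G 0) ⊤ μ01).toReal) ≤ φ 1 :=
      hφ.mono hr (Set.mem_Icc.mpr ⟨zero_le_one, le_refl 1⟩) hr.2
    have hφr0 : 0 ≤ φ ((eLpNorm (G 0) 1 μ01 / eLpNorm (G 0) ⊤ μ01).toReal) :=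
      phi_ratio_nonneg hφ hG0m.aemeasurable
    have hψ01 : ψ ((0:ℕ) + 1 : ℝ) = ψ 1 := by norm_num
    have hδP : δ * (P + 1) = ε / 4 := by
      rw [hδdef]; field_simp
    have key : ψ 1 * (eLpNorm (G 0) ⊤ μ01).toReal *
        φ ((eLpNorm (G 0) 1 μ01 / eLpNorm (G 0) ⊤ μ01).toReal) ≤ ε / 4 := by
      have hBn : 0 ≤ (eLpNorm (G 0) ⊤ μ01).toReal := ENNReal.toReal_nonneg
      nlinarith [mul_le_mul (mul_le_mul_of_nonneg_left hB hψ1.le) hφr hφr0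
        (mul_nonneg hψ1.le hδ.le)]
    calc ψ ((0:ℕ) + 1 : ℝ) * (eLpNorm (G 0) ⊤ μ01).toReal *
        φ ((eLpNorm (G 0) 1 μ01 / eLpNorm (G 0) ⊤ μ01).toReal)
        = ψ 1 * (eLpNorm (G 0) ⊤ μ01).toReal *
          φ ((eLpNorm (G 0) 1 μ01 / eLpNorm (G 0) ⊤ μ01).toReal) := by rw [hψ01]
      _ ≤ ε / 4 := key
  have htailG : ∑' k, c (k+1) ≤ ∑' k, t (k+N) := by
    refine ENNReal.tsum_le_tsum fun k => ?_
    rw [hc, ht]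
    refine ENNReal.ofReal_le_ofReal ?_
    have hGk : G (k+1) = g (k+N) := hGsucc k
    rw [hGk]
    have hψm : ψ (((k+1:ℕ) : ℝ) + 1) ≤ ψ (((k+N:ℕ) : ℝ) + 1) := by
      refine hψ.mono (Set.mem_Ici.mpr (by positivity)) (Set.mem_Ici.mpr (by positivity)) ?_
      push_cast
      have : (1:ℝ) ≤ N := by exact_mod_cast hN1
      linarith
    have hA : 0 ≤ (eLpNorm (g (k+N)) ⊤ μ01).toReal *
        φ ((eLpNorm (g (k+N)) 1 μ01 / eLpNorm (g (k+N)) ⊤ μ01).toReal) :=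
      mul_nonneg ENNReal.toReal_nonneg (phi_ratio_nonneg hφ (hgm (k+N)))
    calc ψ (((k+1:ℕ) : ℝ) + 1) * (eLpNorm (g (k+N)) ⊤ μ01).toReal *
          φ ((eLpNorm (g (k+N)) 1 μ01 / eLpNorm (g (k+N)) ⊤ μ01).toReal)
        = ψ (((k+1:ℕ) : ℝ) + 1) * ((eLpNorm (g (k+N)) ⊤ μ01).toReal *
          φ ((eLpNorm (g (k+N)) 1 μ01 / eLpNorm (g (k+N)) ⊤ μ01).toReal)) := by ring
      _ ≤ ψ (((k+N:ℕ) : ℝ) + 1) * ((eLpNorm (g (k+N)) ⊤ μ01).toReal *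
          φ ((eLpNorm (g (k+N)) 1 μ01 / eLpNorm (g (k+N)) ⊤ μ01).toReal)) :=
          mul_le_mul_of_nonneg_right hψm hA
      _ = _ := by ring
  have hfinal : seqCost φ ψ G < ENNReal.ofReal ε := by
    rw [hcostG]
    have h1 : c 0 + ∑' k, c (k+1) < ENNReal.ofReal (ε/4) + ENNReal.ofReal (ε/4) :=
      ENNReal.add_lt_add_of_le_of_lt (ne_top_of_le_ne_top ENNReal.ofReal_ne_top hc0)
        hc0 (lt_of_le_of_lt htailG hNtail)
    refine lt_of_lt_of_le h1 ?_
    rw [← ENNReal.ofReal_add (by linarith) (by linarith)]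
    exact ENNReal.ofReal_le_ofReal (by linarith)
  exact ⟨s, lt_of_le_of_lt hle hfinal⟩
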